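/- For μ > 0 and ω_v real, the function g(Δt) = μΔt(ω_v² + μ²) - 2μω_v sin(ω_v Δt) e^{-μΔt} + (μ² - ω_v²) cos(ω_v Δt) e^{-μΔt} - μ² + ω_v² is nonnegative for all Δt ≥ 0, and g(0) = 0. -/

import Mathlib

open Real

/-- Explicit antiderivative (in `u`) of `μ * exp (-μ*u) * (2 + μ*(t-u)) * (1 - cos (ωv*u))`. -/
private noncomputable def Aaux (μ ωv t u : ℝ) : ℝ :=
  Real.exp (-μ * u) * (μ * u - 1 - μ * t)
  - Real.exp (-μ * u) *
      ((( -(μ ^ 2 * (2 + μ * t)) / (ωv ^ 2 + μ ^ 2)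
          + μ ^ 2 * (μ ^ 2 - ωv ^ 2) / (ωv ^ 2 + μ ^ 2) ^ 2)
            + (μ ^ 3 / (ωv ^ 2 + μ ^ 2)) * u) * Real.cos (ωv * u)
        - (( -(μ * ωv * (2 + μ * t)) / (ωv ^ 2 + μ ^ 2)
          + 2 * μ ^ 3 * ωv / (ωv ^ 2 + μ ^ 2) ^ 2)
            + (μ ^ 2 * ωv / (ωv ^ 2 + μ ^ 2)) * u) * Real.sin (ωv * u))

private lemma Aaux_hasDerivAt (μ ωv t : ℝ) (hμ : 0 < μ) (u : ℝ) :
    HasDerivAt (Aaux μ ωv t)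
      (μ * Real.exp (-μ * u) * (2 + μ * (t - u)) * (1 - Real.cos (ωv * u))) u := by
  have hN : (ωv ^ 2 + μ ^ 2) ≠ 0 := by positivity
  have he : HasDerivAt (fun x : ℝ => Real.exp (-μ * x)) (Real.exp (-μ * u) * (-μ)) u := by
    have h1 : HasDerivAt (fun x : ℝ => -μ * x) (-μ) u := by
      simpa using (hasDerivAt_id u).const_mul (-μ)
    exact h1.exp
  have hωu : HasDerivAt (fun x : ℝ => ωv * x) ωv u := by
    simpa using (hasDerivAt_id u).const_mul ωv
  have hc : HasDerivAt (fun x : ℝ => Real.cos (ωv * x)) (-Real.sin (ωv * u) * ωv) u := hωu.cos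
  have hs : HasDerivAt (fun x : ℝ => Real.sin (ωv * x)) (Real.cos (ωv * u) * ωv) u := hωu.sin
  have hp1 : HasDerivAt (fun x : ℝ => μ * x - 1 - μ * t) μ u := by
    simpa using (((hasDerivAt_id u).const_mul μ).sub_const 1).sub_const (μ * t)
  have hq1 : HasDerivAt
      (fun x : ℝ => ( -(μ ^ 2 * (2 + μ * t)) / (ωv ^ 2 + μ ^ 2)
          + μ ^ 2 * (μ ^ 2 - ωv ^ 2) / (ωv ^ 2 + μ ^ 2) ^ 2)
            + (μ ^ 3 / (ωv ^ 2 + μ ^ 2)) * x) (μ ^ 3 / (ωv ^ 2 + μ ^ 2)) u := by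
    simpa using ((hasDerivAt_id u).const_mul (μ ^ 3 / (ωv ^ 2 + μ ^ 2))).const_add
      ( -(μ ^ 2 * (2 + μ * t)) / (ωv ^ 2 + μ ^ 2)
          + μ ^ 2 * (μ ^ 2 - ωv ^ 2) / (ωv ^ 2 + μ ^ 2) ^ 2)
  have hq2 : HasDerivAt
      (fun x : ℝ => ( -(μ * ωv * (2 + μ * t)) / (ωv ^ 2 + μ ^ 2)
          + 2 * μ ^ 3 * ωv / (ωv ^ 2 + μ ^ 2) ^ 2)
            + (μ ^ 2 * ωv / (ωv ^ 2 + μ ^ 2)) * x) (μ ^ 2 * ωv / (ωv ^ 2 + μ ^ 2)) u := by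
    simpa using ((hasDerivAt_id u).const_mul (μ ^ 2 * ωv / (ωv ^ 2 + μ ^ 2))).const_add
      ( -(μ * ωv * (2 + μ * t)) / (ωv ^ 2 + μ ^ 2)
          + 2 * μ ^ 3 * ωv / (ωv ^ 2 + μ ^ 2) ^ 2)
  have hbig := (he.mul hp1).sub (he.mul ((hq1.mul hc).sub (hq2.mul hs)))
  refine hbig.congr_deriv ?_
  simp only [Pi.mul_apply, Pi.sub_apply]
  field_simp
  ring

private lemma key_identity (μ ωv t : ℝ) (hμ : 0 < μ) :
    ωv ^ 2 * (μ * t * (ωv ^ 2 + μ ^ 2)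
            - 2 * μ * ωv * Real.sin (ωv * t) * Real.exp (-μ * t)
            + (μ ^ 2 - ωv ^ 2) * Real.cos (ωv * t) * Real.exp (-μ * t)
            - μ ^ 2 + ωv ^ 2)
      = (ωv ^ 2 + μ ^ 2) ^ 2 *
          (Real.exp (-μ * t) * (1 - Real.cos (ωv * t)) + (Aaux μ ωv t t - Aaux μ ωv t 0)) := by
  have hN : (ωv ^ 2 + μ ^ 2) ≠ 0 := by positivity
  simp only [Aaux, mul_zero, Real.exp_zero, Real.cos_zero, Real.sin_zero]
  field_simp
  ring

theorem acf_exponent_nonneg (μ ωv : ℝ) (hμ : 0 < μ) :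
    (∀ Δt : ℝ, 0 ≤ Δt →
      0 ≤ μ * Δt * (ωv ^ 2 + μ ^ 2)
            - 2 * μ * ωv * Real.sin (ωv * Δt) * Real.exp (-μ * Δt)
            + (μ ^ 2 - ωv ^ 2) * Real.cos (ωv * Δt) * Real.exp (-μ * Δt)
            - μ ^ 2 + ωv ^ 2)
    ∧ μ * 0 * (ωv ^ 2 + μ ^ 2)
        - 2 * μ * ωv * Real.sin (ωv * 0) * Real.exp (-μ * 0)
        + (μ ^ 2 - ωv ^ 2) * Real.cos (ωv * 0) * Real.exp (-μ * 0)
        - μ ^ 2 + ωv ^ 2 = 0 := by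
  constructor
  · intro t ht
    rcases eq_or_ne ωv 0 with h0 | h0
    · subst h0
      simp only [mul_zero, zero_mul, Real.sin_zero, Real.cos_zero, mul_one, mul_zero]
      nlinarith [Real.add_one_le_exp (-μ * t), Real.exp_pos (-μ * t), sq_nonneg μ,
        mul_nonneg (mul_nonneg hμ.le hμ.le) (mul_nonneg hμ.le ht)]
    · -- integral of the nonnegative integrand
      have hN : (0 : ℝ) < ωv ^ 2 + μ ^ 2 := by positivity
      have hcont : Continuous fun u : ℝ =>
          μ * Real.exp (-μ * u) * (2 + μ * (t - u)) * (1 - Real.cos (ωv * u)) := by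
        continuity
      have hint : ∫ u in (0:ℝ)..t,
          μ * Real.exp (-μ * u) * (2 + μ * (t - u)) * (1 - Real.cos (ωv * u))
          = Aaux μ ωv t t - Aaux μ ωv t 0 :=
        intervalIntegral.integral_eq_sub_of_hasDerivAt
          (fun u _ => Aaux_hasDerivAt μ ωv t hμ u) (hcont.intervalIntegrable 0 t)
      have hnonneg : 0 ≤ Aaux μ ωv t t - Aaux μ ωv t 0 := by
        rw [← hint]
        apply intervalIntegral.integral_nonneg ht
        intro u hu
        have hu1 : 0 ≤ u := hu.1
        have hu2 : u ≤ t := hu.2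
        have h1 : 0 ≤ 2 + μ * (t - u) := by nlinarith
        have h2 : 0 ≤ 1 - Real.cos (ωv * u) := by
          have := Real.cos_le_one (ωv * u); linarith
        have h3 : 0 ≤ μ * Real.exp (-μ * u) := by positivity
        exact mul_nonneg (mul_nonneg h3 h1) h2
      have hbnd : 0 ≤ Real.exp (-μ * t) * (1 - Real.cos (ωv * t)) := by
        have := Real.cos_le_one (ωv * t)
        have := Real.exp_pos (-μ * t)
        nlinarith
      have hkey := key_identity μ ωv t hμ
      have hω2 : (0 : ℝ) < ωv ^ 2 := by positivity
      nlinarith [mul_nonneg (sq_nonneg (ωv ^ 2 + μ ^ 2)) (add_nonneg hbnd hnonneg)]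
  · simp
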